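/- arXiv:1508.05834 — 3 statements merged into one kernel-verified Lean document; each statement's English description precedes it below -/
import Mathlib

section
/- For every integer r ≥ 4 and positive integer N, the graph G¹_{r,N}, obtained from the undirected de Bruijn graph D_{N(r-2)², r-2} by attaching to each of its vertices exactly 2N disjoint copies of K_{r-1} (identifying one vertex of each copy with that vertex), has diameter at most r, maximum degree at most 2N(r-1)(r-2), and at least 2N·(N(r-2)²)^{r-2}·(r-2) vertices of degree r−2. -/
def shiftRel (t k : ℕ) (u v : Fin k → Fin t) : Prop :=
  ∀ (i : ℕ) (h : i + 1 < k), u ⟨i, Nat.lt_of_succ_lt h⟩ = v ⟨i + 1, h⟩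

/-- The undirected de Bruijn graph of type `(t, k)`. -/
def deBruijn (t k : ℕ) : SimpleGraph (Fin k → Fin t) where
  Adj u v := u ≠ v ∧ (shiftRel t k u v ∨ shiftRel t k v u)
  symm := ⟨fun _ _ h => ⟨h.1.symm, h.2.symm⟩⟩
  loopless := ⟨fun _ h => h.1 rfl⟩

/-- The graph obtained from the de Bruijn graph `D_{t,k}` by attaching, at each of its
vertices, `m` disjoint cliques on `s + 1` vertices (one vertex of each clique being
identified with the corresponding de Bruijn vertex, `s` new vertices per clique). -/
def attachCliques (t k m s : ℕ) :
    SimpleGraph ((Fin k → Fin t) ⊕ ((Fin k → Fin t) × Fin m × Fin s)) where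
  Adj x y :=
    match x, y with
    | .inl u, .inl v => (deBruijn t k).Adj u v
    | .inl u, .inr (v, _, _) => u = v
    | .inr (v, _, _), .inl u => u = v
    | .inr (v, j, i), .inr (v', j', i') => v = v' ∧ j = j' ∧ i ≠ i'
  symm := by
    refine ⟨?_⟩
    rintro (u | ⟨v, j, i⟩) (u' | ⟨v', j', i'⟩) h
    · exact (deBruijn t k).adj_symm h
    · exact h
    · exact h
    · exact ⟨h.1.symm, h.2.1.symm, h.2.2.symm⟩
  loopless := by
    refine ⟨?_⟩
    rintro (u | ⟨v, j, i⟩) h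
    · exact (deBruijn t k).irrefl h
    · exact h.2.2 rfl

/-- The graph `G¹_{r,N}`: the de Bruijn graph `D_{N(r-2)², r-2}` with `2N` copies of
`K_{r-1}` attached at each of its vertices. -/
def G1 (r N : ℕ) :=
  attachCliques (N * (r - 2) ^ 2) (r - 2) (2 * N) (r - 2)

def interp (t k : ℕ) (u v : Fin k → Fin t) (j : ℕ) : Fin k → Fin t :=
  fun i => if h : (i : ℕ) + j < k then u ⟨(i : ℕ) + j, h⟩
    else v ⟨((i : ℕ) + j - k) % k, Nat.mod_lt _ (Nat.lt_of_le_of_lt (Nat.zero_le _) i.isLt)⟩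

lemma interp_congr {t k : ℕ} (u v : Fin k → Fin t) {j j' : ℕ} {a b : Fin k}
    (h : (a : ℕ) + j = (b : ℕ) + j') : interp t k u v j a = interp t k u v j' b := by
  unfold interp
  split_ifs with h1 h2 h2
  · exact congrArg u (Fin.ext h)
  · omega
  · omega
  · refine congrArg v (Fin.ext ?_)
    show ((a : ℕ) + j - k) % k = ((b : ℕ) + j' - k) % k
    rw [show (a : ℕ) + j - k = (b : ℕ) + j' - k from by omega]

lemma interp_zero {t k : ℕ} (u v : Fin k → Fin t) : interp t k u v 0 = u := by
  funext i
  unfold interp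
  rw [dif_pos (show (i : ℕ) + 0 < k by simpa using i.isLt)]
  exact congrArg u (Fin.ext (by simp))

lemma interp_k {t k : ℕ} (u v : Fin k → Fin t) : interp t k u v k = v := by
  funext i
  unfold interp
  rw [dif_neg (by omega)]
  refine congrArg v (Fin.ext ?_)
  show ((i : ℕ) + k - k) % k = (i : ℕ)
  rw [Nat.add_sub_cancel, Nat.mod_eq_of_lt i.isLt]

lemma interp_step {t k : ℕ} (u v : Fin k → Fin t) (j : ℕ) :
    ∃ p : (deBruijn t k).Walk (interp t k u v j) (interp t k u v (j + 1)), p.length ≤ 1 := by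
  by_cases h : interp t k u v j = interp t k u v (j + 1)
  · exact ⟨SimpleGraph.Walk.nil.copy rfl h, by simp⟩
  · refine ⟨SimpleGraph.Walk.cons (show (deBruijn t k).Adj (interp t k u v j) (interp t k u v (j + 1)) from show interp t k u v j ≠ interp t k u v (j + 1) ∧ (shiftRel t k (interp t k u v j) (interp t k u v (j + 1)) ∨ shiftRel t k (interp t k u v (j + 1)) (interp t k u v j)) from ⟨h, Or.inr ?_⟩) SimpleGraph.Walk.nil, by simp⟩
    intro i hi
    exact interp_congr u v (by simp; omega)

lemma deBruijn_diam (t k : ℕ) (u v : Fin k → Fin t) :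
    ∃ p : (deBruijn t k).Walk u v, p.length ≤ k := by
  have key : ∀ j, ∃ p : (deBruijn t k).Walk (interp t k u v 0) (interp t k u v j),
      p.length ≤ j := by
    intro j
    induction j with
    | zero => exact ⟨.nil, by simp⟩
    | succ n ih =>
      obtain ⟨p, hp⟩ := ih
      obtain ⟨q, hq⟩ := interp_step u v n
      exact ⟨p.append q, by rw [SimpleGraph.Walk.length_append]; omega⟩
  obtain ⟨p, hp⟩ := key k
  exact ⟨p.copy (interp_zero u v) (interp_k u v), by simpa using hp⟩

def inlHom (t k m s : ℕ) : deBruijn t k →g attachCliques t k m s where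
  toFun := Sum.inl
  map_rel' := fun h => h

lemma attach_diam (t k m s : ℕ)
    (u v : (Fin k → Fin t) ⊕ ((Fin k → Fin t) × Fin m × Fin s)) :
    ∃ p : (attachCliques t k m s).Walk u v, p.length ≤ k + 2 := by
  have base : ∀ a b : Fin k → Fin t,
      ∃ p : (attachCliques t k m s).Walk (Sum.inl a) (Sum.inl b), p.length ≤ k := by
    intro a b
    obtain ⟨p, hp⟩ := deBruijn_diam t k a b
    exact ⟨(p.map (inlHom t k m s)).copy rfl rfl, ((SimpleGraph.Walk.length_copy _ _ _).trans (SimpleGraph.Walk.length_map _ _)).trans_le hp⟩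
  obtain (a | ⟨a, ja, ia⟩) := u <;> obtain (b | ⟨b, jb, ib⟩) := v
  · obtain ⟨p, hp⟩ := base a b
    exact ⟨p, by omega⟩
  · obtain ⟨p, hp⟩ := base a b
    exact ⟨p.concat (show (attachCliques t k m s).Adj (Sum.inl b) (Sum.inr (b, jb, ib)) from rfl), by rw [SimpleGraph.Walk.length_concat]; omega⟩
  · obtain ⟨p, hp⟩ := base a b
    exact ⟨SimpleGraph.Walk.cons (show (attachCliques t k m s).Adj (Sum.inr (a, ja, ia)) (Sum.inl a) from rfl) p, by rw [SimpleGraph.Walk.length_cons]; omega⟩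
  · obtain ⟨p, hp⟩ := base a b
    exact ⟨SimpleGraph.Walk.cons (show (attachCliques t k m s).Adj (Sum.inr (a, ja, ia)) (Sum.inl a) from rfl) (p.concat (show (attachCliques t k m s).Adj (Sum.inl b) (Sum.inr (b, jb, ib)) from rfl)),
      by rw [SimpleGraph.Walk.length_cons, SimpleGraph.Walk.length_concat]; omega⟩

lemma deg_inr (t k m s : ℕ) (v : Fin k → Fin t) (j : Fin m) (i : Fin s) :
    {u | (attachCliques t k m s).Adj (Sum.inr (v, j, i)) u}.ncard = s := by
  have hset : {u | (attachCliques t k m s).Adj (Sum.inr (v, j, i)) u}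
      = insert (Sum.inl v) ((fun i' => Sum.inr (v, j, i') :
          Fin s → (Fin k → Fin t) ⊕ ((Fin k → Fin t) × Fin m × Fin s)) '' {i}ᶜ) := by
    ext x
    obtain (a | ⟨a, ja, ia⟩) := x
    · simp only [Set.mem_setOf_eq, Set.mem_insert_iff, Set.mem_image]
      constructor
      · intro h
        exact Or.inl (by rw [show a = v from h])
      · rintro (h | ⟨i', _, h⟩)
        · exact Sum.inl.inj h
        · cases h
    · simp only [Set.mem_setOf_eq, Set.mem_insert_iff, Set.mem_image, Set.mem_compl_iff,
        Set.mem_singleton_iff]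
      constructor
      · rintro ⟨rfl, rfl, hne⟩
        exact Or.inr ⟨ia, Ne.symm hne, rfl⟩
      · rintro (h | ⟨i', hi', h⟩)
        · cases h
        · cases h
          exact ⟨rfl, rfl, Ne.symm hi'⟩
  rw [hset, Set.ncard_insert_of_notMem (by simp), Set.ncard_image_of_injective _
    (fun a b h => by simpa using h)]
  have h1 := Set.ncard_add_ncard_compl ({i} : Set (Fin s))
  rw [Set.ncard_singleton, Nat.card_eq_fintype_card, Fintype.card_fin] at h1
  have : 0 < s := i.pos
  omega

lemma deg_inl (t k m s : ℕ) (hk : 0 < k) (u : Fin k → Fin t) :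
    {x | (attachCliques t k m s).Adj (Sum.inl u) x}.ncard ≤ t + t + m * s := by
  set A := {v | shiftRel t k u v} with hA
  set B := {v | shiftRel t k v u} with hB
  set C := {p : (Fin k → Fin t) × Fin m × Fin s | p.1 = u} with hC
  have hsub : {x | (attachCliques t k m s).Adj (Sum.inl u) x}
      ⊆ (Sum.inl '' A ∪ Sum.inl '' B) ∪ Sum.inr '' C := by
    rintro (a | ⟨a, ja, ia⟩) h
    · rcases (show u ≠ a ∧ (shiftRel t k u a ∨ shiftRel t k a u) from h).2 with h2 | h2
      · exact Or.inl (Or.inl ⟨a, h2, rfl⟩)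
      · exact Or.inl (Or.inr ⟨a, h2, rfl⟩)
    · exact Or.inr ⟨(a, ja, ia), (show u = a from h).symm, rfl⟩
  have hAcard : A.ncard ≤ t := by
    have := Set.ncard_le_ncard_of_injOn (s := A) (t := Set.univ) (fun v : Fin k → Fin t => v ⟨0, hk⟩)
      (fun a _ => Set.mem_univ _) ?_ Set.finite_univ
    · simpa [Set.ncard_univ] using this
    · intro a ha b hb hab
      funext ii
      obtain ⟨iv, hiv⟩ := ii
      cases iv with
      | zero => exact hab
      | succ n => rw [← ha n hiv, ← hb n hiv]
  have hk1 : k - 1 < k := by omega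
  have hBinj : Set.InjOn (fun v : Fin k → Fin t => v ⟨k - 1, hk1⟩) B := by
    intro a ha b hb hab
    have hab' : a ⟨k - 1, hk1⟩ = b ⟨k - 1, hk1⟩ := hab
    funext ii
    have h2 := ii.isLt
    by_cases hlt : ii.1 + 1 < k
    · exact (ha ii.1 hlt).trans (hb ii.1 hlt).symm
    · have he : ii = ⟨k - 1, hk1⟩ := Fin.ext (show ii.1 = k - 1 by clear ha hb hab hab'; omega)
      rw [he]
      exact hab'
  have hBcard : B.ncard ≤ t := by
    have := Set.ncard_le_ncard_of_injOn (s := B) (t := Set.univ)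
      (fun v : Fin k → Fin t => v ⟨k - 1, hk1⟩)
      (fun a _ => Set.mem_univ _) hBinj Set.finite_univ
    simpa [Set.ncard_univ] using this
  have hCcard : C.ncard ≤ m * s := by
    have := Set.ncard_le_ncard_of_injOn (s := C) (t := Set.univ) (Prod.snd)
      (fun a _ => Set.mem_univ _)
      (fun a ha b hb hab =>
        Prod.ext ((show a.1 = u from ha).trans (show b.1 = u from hb).symm) hab)
      Set.finite_univ
    simpa [Set.ncard_univ, Nat.card_eq_fintype_card] using this
  calc {x | (attachCliques t k m s).Adj (Sum.inl u) x}.ncard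
      ≤ ((Sum.inl '' A ∪ Sum.inl '' B) ∪ Sum.inr '' C).ncard :=
        Set.ncard_le_ncard hsub (Set.toFinite _)
    _ ≤ (Sum.inl '' A ∪ Sum.inl '' B).ncard + (Sum.inr '' C).ncard := Set.ncard_union_le _ _
    _ ≤ ((Sum.inl '' A).ncard + (Sum.inl '' B).ncard) + (Sum.inr '' C).ncard :=
        Nat.add_le_add_right (Set.ncard_union_le _ _) _
    _ = (A.ncard + B.ncard) + C.ncard := by
        rw [Set.ncard_image_of_injective _ Sum.inl_injective,
          Set.ncard_image_of_injective _ Sum.inl_injective,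
          Set.ncard_image_of_injective _ Sum.inr_injective]
    _ ≤ (t + t) + m * s := by
        have := Nat.add_le_add (Nat.add_le_add hAcard hBcard) hCcard
        exact this

theorem stmt_13 (r N : ℕ) (hr : 4 ≤ r) (hN : 1 ≤ N) :
    (∀ u v, ∃ p : (G1 r N).Walk u v, p.length ≤ r) ∧
    (∀ v, {u | (G1 r N).Adj v u}.ncard ≤ 2 * N * (r - 1) * (r - 2)) ∧
    2 * N * (N * (r - 2) ^ 2) ^ (r - 2) * (r - 2) ≤
      {v | {u | (G1 r N).Adj v u}.ncard = r - 2}.ncard := by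
  have hk : 0 < r - 2 := by omega
  refine ⟨?_, ?_, ?_⟩
  · intro u v
    obtain ⟨p, hp⟩ := attach_diam (N * (r - 2) ^ 2) (r - 2) (2 * N) (r - 2) u v
    exact ⟨p, show p.length ≤ r by omega⟩
  · intro v
    obtain (a | ⟨a, j, i⟩) := v
    · refine le_trans (deg_inl (N * (r - 2) ^ 2) (r - 2) (2 * N) (r - 2) hk a) ?_
      obtain ⟨b, rfl⟩ : ∃ b, r = b + 2 := ⟨r - 2, by omega⟩
      simp only [Nat.add_sub_cancel, show b + 2 - 1 = b + 1 from rfl]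
      exact Nat.le_of_eq (by ring)
    · refine le_trans (Nat.le_of_eq (deg_inr (N * (r - 2) ^ 2) (r - 2) (2 * N) (r - 2) a j i)) ?_
      calc r - 2 = 1 * (r - 2) := (one_mul _).symm
        _ ≤ 2 * N * (r - 1) * (r - 2) := by
            refine Nat.mul_le_mul_right _ ?_
            calc 1 = 1 * 1 := rfl
              _ ≤ 2 * N * (r - 1) := Nat.mul_le_mul (by omega) (by omega)
  · have hsub : Set.range (Sum.inr :
        ((Fin (r - 2) → Fin (N * (r - 2) ^ 2)) × Fin (2 * N) × Fin (r - 2)) →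
        (Fin (r - 2) → Fin (N * (r - 2) ^ 2)) ⊕
          ((Fin (r - 2) → Fin (N * (r - 2) ^ 2)) × Fin (2 * N) × Fin (r - 2)))
        ⊆ {v | {u | (G1 r N).Adj v u}.ncard = r - 2} := by
      rintro x ⟨⟨a, j, i⟩, rfl⟩
      exact deg_inr (N * (r - 2) ^ 2) (r - 2) (2 * N) (r - 2) a j i
    have hcard : (Set.range (Sum.inr :
        ((Fin (r - 2) → Fin (N * (r - 2) ^ 2)) × Fin (2 * N) × Fin (r - 2)) →
        (Fin (r - 2) → Fin (N * (r - 2) ^ 2)) ⊕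
          ((Fin (r - 2) → Fin (N * (r - 2) ^ 2)) × Fin (2 * N) × Fin (r - 2)))).ncard
        = (N * (r - 2) ^ 2) ^ (r - 2) * (2 * N * (r - 2)) := by
      rw [← Set.image_univ, Set.ncard_image_of_injective _ Sum.inr_injective, Set.ncard_univ]
      simp [Nat.card_eq_fintype_card, Fintype.card_prod, Fintype.card_fun, Fintype.card_fin]
    calc 2 * N * (N * (r - 2) ^ 2) ^ (r - 2) * (r - 2)
        = (N * (r - 2) ^ 2) ^ (r - 2) * (2 * N * (r - 2)) := by ring
      _ ≤ _ := hcard ▸ Set.ncard_le_ncard hsub (Set.toFinite _)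
end

section
/- For every integer r ≥ 9 and every constant C₀ ≥ 0, there exist graphs G with arbitrarily large maximum degree Δ(G), with minimum degree δ(G) = r−2 and diameter at most r, such that G admits no r-distant set distinguishing total colouring using at most Δ(G) + C₀ colours. Consequently, any theorem asserting χ''_{a,r}(G) ≤ Δ(G) + C₀ for all graphs with δ(G) ≥ δ₀ must have δ₀ ≥ r−1. -/
/-- The degree of a vertex (as the number of its neighbours). -/
noncomputable def degOf {V : Type*} (G : SimpleGraph V) (v : V) : ℕ :=
  {u | G.Adj v u}.ncard

/-- The maximum degree `Δ(G)`. -/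
noncomputable def maxDeg {V : Type*} (G : SimpleGraph V) : ℕ :=
  sSup (Set.range (degOf G))

/-- The minimum degree `δ(G)`. -/
noncomputable def minDeg {V : Type*} (G : SimpleGraph V) : ℕ :=
  sInf (Set.range (degOf G))

/-- The pallet of a vertex under a total colouring: its own colour together with the
colours of its incident edges. -/
def pallet {V : Type*} (G : SimpleGraph V) (cv : V → ℕ) (ce : Sym2 V → ℕ) (v : V) : Set ℕ :=
  {cv v} ∪ ce '' G.incidenceSet v

/-- `cv, ce` form a proper total colouring of `G`. -/
def IsProperTotal {V : Type*} (G : SimpleGraph V) (cv : V → ℕ) (ce : Sym2 V → ℕ) : Prop :=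
  (∀ u v, G.Adj u v → cv u ≠ cv v) ∧
  (∀ e f, e ∈ G.edgeSet → f ∈ G.edgeSet → e ≠ f → (∃ w, w ∈ e ∧ w ∈ f) → ce e ≠ ce f) ∧
  (∀ v, ∀ e ∈ G.incidenceSet v, cv v ≠ ce e)

/-- `cv, ce` form an `r`-distant set distinguishing total colouring of `G` with colours
`1, …, k`. -/
def IsRDistSetDist {V : Type*} (G : SimpleGraph V) (r k : ℕ)
    (cv : V → ℕ) (ce : Sym2 V → ℕ) : Prop :=
  IsProperTotal G cv ce ∧
  (∀ v, cv v ∈ Set.Icc 1 k) ∧ (∀ e ∈ G.edgeSet, ce e ∈ Set.Icc 1 k) ∧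
  ∀ u v, 1 ≤ G.dist u v → G.dist u v ≤ r → pallet G cv ce u ≠ pallet G cv ce v



/-- `(a+b)^n * a ≤ a^n * (a + 2*n*b)` when `2*n*b ≤ a`. -/
lemma aux_pow_bound (n : ℕ) : ∀ a b : ℕ, 2*n*b ≤ a → (a+b)^n * a ≤ a^n * (a + 2*n*b) := by
  induction n with
  | zero => intro a b _; simp
  | succ n ih =>
    intro a b h
    have h' : 2*n*b ≤ a := le_trans (by nlinarith) h
    have ihh := ih a b h'
    have key : (a + 2*n*b) * (a + b) ≤ a * (a + 2*(n+1)*b) := by nlinarith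
    calc (a+b)^(n+1) * a = ((a+b)^n * a) * (a+b) := by ring
      _ ≤ (a^n * (a + 2*n*b)) * (a+b) := Nat.mul_le_mul_right _ ihh
      _ = a^n * ((a + 2*n*b) * (a+b)) := by ring
      _ ≤ a^n * (a * (a + 2*(n+1)*b)) := Nat.mul_le_mul_left _ key
      _ = a^(n+1) * (a + 2*(n+1)*b) := by ring

lemma aux_pow_two (n a b : ℕ) (ha : 0 < a) (h : 2*n*b ≤ a) : (a+b)^n ≤ 2 * a^n := by
  have h1 := aux_pow_bound n a b h
  have h2 : a^n * (a + 2*n*b) ≤ a^n * (2*a) := Nat.mul_le_mul_left _ (by omega)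
  have : (a+b)^n * a ≤ (2 * a^n) * a := by calc (a+b)^n * a ≤ a^n * (2*a) := le_trans h1 h2
                                               _ = (2*a^n) * a := by ring
  exact Nat.le_of_mul_le_mul_right this ha

/-- Core: `2^(m+2) * (m+1)^(m+1) ≤ m^m * Nat.factorial (m+1)` for `m ≥ 7`. -/
lemma aux_core : ∀ m : ℕ, 7 ≤ m → 2^(m+2) * (m+1)^(m+1) ≤ m^m * Nat.factorial (m+1) := by
  intro m hm
  induction m with
  | zero => omega
  | succ m ih =>
    rcases Nat.lt_or_ge m 7 with h7 | h7
    · have h6 : m = 6 := by omega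
      subst h6
      norm_num [Nat.factorial]
    · have hP := ih h7
      -- key : 2 * m^m * (m+2)^(m+1) ≤ (m+1)^(2*(m+1))
      have key : 2 * (m^m * (m+2)^(m+1)) ≤ (m+1)^(2*(m+1)) := by
        have h1 : (m*(m+2))^(m+1) ≤ ((m+1)^2)^(m+1) :=
          Nat.pow_le_pow_left (by nlinarith) _
        have h2 : 2 * (m^m * (m+2)^(m+1)) ≤ m^(m+1) * (m+2)^(m+1) := by
          have : 2 * m^m ≤ m^(m+1) := by
            calc 2 * m^m ≤ m * m^m := Nat.mul_le_mul_right _ (by omega)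
              _ = m^(m+1) := by ring
          calc 2 * (m^m * (m+2)^(m+1)) = (2 * m^m) * (m+2)^(m+1) := by ring
            _ ≤ m^(m+1) * (m+2)^(m+1) := Nat.mul_le_mul_right _ this
        calc 2 * (m^m * (m+2)^(m+1)) ≤ m^(m+1) * (m+2)^(m+1) := h2
          _ = (m*(m+2))^(m+1) := by rw [Nat.mul_pow]
          _ ≤ ((m+1)^2)^(m+1) := h1
          _ = (m+1)^(2*(m+1)) := by rw [← Nat.pow_mul, Nat.mul_comm]
      -- want: 2^(m+3) * (m+2)^(m+2) ≤ (m+1)^(m+1) * Nat.factorial (m+2)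
      have hmm : 0 < m^m := Nat.pow_pos (by omega)
      have main : m^m * (2^(m+3) * (m+2)^(m+2)) ≤ m^m * ((m+1)^(m+1) * Nat.factorial (m+2)) := by
        calc m^m * (2^(m+3) * (m+2)^(m+2))
            = 2^(m+2) * ((m+2) * (2 * (m^m * (m+2)^(m+1)))) := by ring
          _ ≤ 2^(m+2) * ((m+2) * (m+1)^(2*(m+1))) :=
              Nat.mul_le_mul_left _ (Nat.mul_le_mul_left _ key)
          _ = (m+2) * (m+1)^(m+1) * (2^(m+2) * (m+1)^(m+1)) := by
              rw [Nat.two_mul, pow_add]; ring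
          _ ≤ (m+2) * (m+1)^(m+1) * (m^m * Nat.factorial (m+1)) := Nat.mul_le_mul_left _ hP
          _ = m^m * ((m+1)^(m+1) * ((m+2) * Nat.factorial (m+1))) := by ring
          _ = m^m * ((m+1)^(m+1) * Nat.factorial (m+2)) := by rw [Nat.factorial_succ (m+1)]
      exact Nat.le_of_mul_le_mul_left main hmm



lemma aux_count (m N C₀ : ℕ) (hm : 7 ≤ m) (hN : 1 ≤ N) (hC : C₀ ≤ N*m) :
    Nat.choose (2*N*m*(m+1) + C₀) (m+1) < 2 * N^(m+1) * m^(2*m+1) := by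
  set a := 2*N*m*(m+1) with ha
  have hapos : 0 < a := by positivity
  have h1 : Nat.factorial (m+1) * Nat.choose (a + C₀) (m+1) ≤ (a + C₀)^(m+1) := by
    rw [← Nat.descFactorial_eq_factorial_mul_choose]
    exact Nat.descFactorial_le_pow _ _
  have h2 : (a + C₀)^(m+1) ≤ 2 * a^(m+1) := by
    apply aux_pow_two _ _ _ hapos
    calc 2*(m+1)*C₀ ≤ 2*(m+1)*(N*m) := Nat.mul_le_mul_left _ hC
      _ = a := by rw [ha]; ring
  have h3 : 2 * a^(m+1) = N^(m+1)*m^(m+1) * (2^(m+2)*(m+1)^(m+1)) := by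
    rw [ha, Nat.mul_pow, Nat.mul_pow, Nat.mul_pow]; ring
  have h4 : N^(m+1)*m^(m+1) * (2^(m+2)*(m+1)^(m+1)) ≤ N^(m+1)*m^(m+1) * (m^m * Nat.factorial (m+1)) :=
    Nat.mul_le_mul_left _ (aux_core m hm)
  have h5 : N^(m+1)*m^(m+1) * (m^m * Nat.factorial (m+1)) = (N^(m+1) * m^(2*m+1)) * Nat.factorial (m+1) := by
    ring
  have h6 : Nat.factorial (m+1) * Nat.choose (a + C₀) (m+1) ≤ (N^(m+1) * m^(2*m+1)) * Nat.factorial (m+1) := by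
    omega
  have hfpos : 0 < Nat.factorial (m+1) := Nat.factorial_pos _
  have h7 : Nat.choose (a + C₀) (m+1) ≤ N^(m+1) * m^(2*m+1) := by
    have := h6
    rw [Nat.mul_comm (Nat.factorial (m+1))] at this
    exact Nat.le_of_mul_le_mul_right this hfpos
  have hpos : 0 < N^(m+1) * m^(2*m+1) := by positivity
  have hr : 2 * N^(m+1) * m^(2*m+1) = 2*(N^(m+1) * m^(2*m+1)) := by ring
  omega


namespace S14

abbrev Wd (m A : ℕ) := Fin m → Fin A
abbrev Vt (m A T : ℕ) := Wd m A ⊕ (Wd m A × Fin T × Fin m)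

def Shift {m A : ℕ} (u v : Wd m A) : Prop :=
  ∀ (i : ℕ) (h1 : i < m) (h2 : i + 1 < m), v ⟨i, h1⟩ = u ⟨i+1, h2⟩

def DBAdj {m A T : ℕ} : Vt m A T → Vt m A T → Prop
  | .inl u, .inl v => u ≠ v ∧ (Shift u v ∨ Shift v u)
  | .inl u, .inr p => u = p.1
  | .inr p, .inl u => p.1 = u
  | .inr p, .inr q => p.1 = q.1 ∧ p.2.1 = q.2.1 ∧ p.2.2 ≠ q.2.2

def DB (m A T : ℕ) : SimpleGraph (Vt m A T) where
  Adj := DBAdj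
  symm := by
    constructor
    rintro (u|p) (v|q) h
    · exact ⟨h.1.symm, h.2.symm⟩
    · exact h.symm
    · exact h.symm
    · exact ⟨h.1.symm, h.2.1.symm, h.2.2.symm⟩
  loopless := by
    constructor
    rintro (u|p) h
    · exact h.1 rfl
    · exact h.2.2 rfl

variable {m A T : ℕ}

lemma nbhd_cl (hm : 0 < m) (w : Wd m A) (t : Fin T) (i : Fin m) :
    {u | (DB m A T).Adj (.inr (w,t,i)) u}
      = insert (Sum.inl w) ((fun j => Sum.inr (w,t,j)) '' {i}ᶜ) := by
  ext x
  rcases x with u | ⟨w',t',j⟩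
  · simp only [Set.mem_setOf_eq, Set.mem_insert_iff, Set.mem_image]
    constructor
    · intro h; exact Or.inl (congrArg Sum.inl h.symm)
    · rintro (h | ⟨j, _, h⟩)
      · cases h; rfl
      · exact absurd h (by simp)
  · simp only [Set.mem_setOf_eq, Set.mem_insert_iff, Set.mem_image, Set.mem_compl_iff,
      Set.mem_singleton_iff]
    constructor
    · rintro ⟨h1, h2, h3⟩
      refine Or.inr ⟨j, ?_, ?_⟩
      · exact fun hji => h3 hji.symm
      · cases h1; cases h2; rfl
    · rintro (h | ⟨j', hj', h⟩)
      · exact absurd h (by simp)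
      · obtain ⟨rfl, rfl, rfl⟩ : w = w' ∧ t = t' ∧ j' = j := by
          simpa [Prod.ext_iff] using h
        exact ⟨rfl, rfl, fun hij => hj' hij.symm⟩

lemma ncard_compl_singleton (i : Fin m) : ({i}ᶜ : Set (Fin m)).ncard = m - 1 := by
  rw [Set.compl_eq_univ_diff, Set.ncard_diff (Set.subset_univ _), Set.ncard_univ,
    Set.ncard_singleton, Nat.card_eq_fintype_card, Fintype.card_fin]

lemma deg_cl (hm : 0 < m) (w : Wd m A) (t : Fin T) (i : Fin m) :
    degOf (DB m A T) (.inr (w,t,i)) = m := by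
  unfold degOf
  rw [nbhd_cl hm w t i,
    Set.ncard_insert_of_notMem (by simp) (Set.toFinite _),
    Set.ncard_image_of_injective _ (fun a b hab => by simpa using hab),
    ncard_compl_singleton]
  omega

lemma deg_hub_ge (w : Wd m A) : T * m ≤ degOf (DB m A T) (.inl w) := by
  unfold degOf
  have hsub : (fun p : Fin T × Fin m => (Sum.inr (w, p) : Vt m A T)) '' Set.univ
      ⊆ {u | (DB m A T).Adj (.inl w) u} := by
    rintro x ⟨p, -, rfl⟩
    exact rfl
  have h := Set.ncard_le_ncard hsub (Set.toFinite _)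
  rwa [Set.ncard_image_of_injective _ (fun a b hab => by simpa using hab),
    Set.ncard_univ, Nat.card_eq_fintype_card, Fintype.card_prod, Fintype.card_fin,
    Fintype.card_fin] at h

lemma succ_inj (hm : 0 < m) (w v1 v2 : Wd m A) (h1 : Shift w v1) (h2 : Shift w v2)
    (heq : v1 ⟨m-1, Nat.sub_lt hm one_pos⟩ = v2 ⟨m-1, Nat.sub_lt hm one_pos⟩) : v1 = v2 := by
  funext i
  by_cases hlt : (i : ℕ) + 1 < m
  · have e1 := h1 i.1 i.2 hlt
    have e2 := h2 i.1 i.2 hlt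
    simpa using e1.trans e2.symm
  · have hiv : i = ⟨m-1, Nat.sub_lt hm one_pos⟩ := Fin.ext (show (i : ℕ) = m - 1 by omega)
    rw [hiv]
    exact heq

lemma succ_ncard (hm : 0 < m) (w : Wd m A) : {v : Wd m A | Shift w v}.ncard ≤ A := by
  have hinj : Set.InjOn (fun v : Wd m A => v ⟨m-1, Nat.sub_lt hm one_pos⟩)
      {v : Wd m A | Shift w v} := fun v1 h1 v2 h2 heq => succ_inj hm w v1 v2 h1 h2 heq
  have h := Set.ncard_le_ncard_of_injOn (t := (Set.univ : Set (Fin A)))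
    _ (fun a _ => Set.mem_univ _) hinj Set.finite_univ
  rwa [Set.ncard_univ, Nat.card_eq_fintype_card, Fintype.card_fin] at h

lemma pred_inj (hm : 0 < m) (w v1 v2 : Wd m A) (h1 : Shift v1 w) (h2 : Shift v2 w)
    (heq : v1 ⟨0, hm⟩ = v2 ⟨0, hm⟩) : v1 = v2 := by
  funext i
  by_cases hz : (i : ℕ) = 0
  · have hiv : i = ⟨0, hm⟩ := Fin.ext (show (i : ℕ) = 0 from hz)
    rw [hiv]
    exact heq
  · obtain ⟨j, hj'⟩ : ∃ j, (i : ℕ) = j + 1 := ⟨(i : ℕ) - 1, by omega⟩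
    have hj : j < m := by omega
    have hji : j + 1 < m := by omega
    have e1 := h1 j hj hji
    have e2 := h2 j hj hji
    have hiv : i = ⟨j + 1, hji⟩ := Fin.ext hj'
    rw [hiv]
    exact e1.symm.trans e2

lemma pred_ncard (hm : 0 < m) (w : Wd m A) : {v : Wd m A | Shift v w}.ncard ≤ A := by
  have hinj : Set.InjOn (fun v : Wd m A => v ⟨0, hm⟩) {v : Wd m A | Shift v w} :=
    fun v1 h1 v2 h2 heq => pred_inj hm w v1 v2 h1 h2 heq
  have h := Set.ncard_le_ncard_of_injOn (t := (Set.univ : Set (Fin A)))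
    _ (fun a _ => Set.mem_univ _) hinj Set.finite_univ
  rwa [Set.ncard_univ, Nat.card_eq_fintype_card, Fintype.card_fin] at h

lemma deg_hub_le (hm : 0 < m) (w : Wd m A) : degOf (DB m A T) (.inl w) ≤ 2*A + T*m := by
  unfold degOf
  have hsub : {u | (DB m A T).Adj (.inl w) u}
      ⊆ Sum.inl '' ({v | Shift w v} ∪ {v | Shift v w})
        ∪ (fun p : Fin T × Fin m => (Sum.inr (w, p) : Vt m A T)) '' Set.univ := by
    rintro (v | ⟨w',t,i⟩) h
    · exact Or.inl ⟨v, h.2, rfl⟩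
    · refine Or.inr ⟨(t,i), trivial, ?_⟩
      obtain rfl : w = w' := h
      rfl
  refine le_trans (Set.ncard_le_ncard hsub (Set.toFinite _)) ?_
  refine le_trans (Set.ncard_union_le _ _) ?_
  have h1 : (Sum.inl '' ({v | Shift w v} ∪ {v | Shift v w}) : Set (Vt m A T)).ncard ≤ 2*A := by
    rw [Set.ncard_image_of_injective _ Sum.inl_injective]
    refine le_trans (Set.ncard_union_le _ _) ?_
    have := succ_ncard (A := A) hm w
    have := pred_ncard (A := A) hm w
    omega
  have h2 : ((fun p : Fin T × Fin m => (Sum.inr (w, p) : Vt m A T)) '' Set.univ).ncard ≤ T*m := by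
    rw [Set.ncard_image_of_injective _ (fun a b hab => by simpa using hab),
      Set.ncard_univ, Nat.card_eq_fintype_card, Fintype.card_prod, Fintype.card_fin,
      Fintype.card_fin]
  omega

end S14


namespace S14
open SimpleGraph
variable {m A T : ℕ}

lemma walk_hub (hm : 0 < m) : ∀ (k : ℕ), k ≤ m → ∀ u v : Wd m A,
    (∀ (i : ℕ) (hi : i < m) (hik : i + k < m), v ⟨i, hi⟩ = u ⟨i + k, hik⟩) →
    ∃ p : (DB m A T).Walk (.inl u) (.inl v), p.length ≤ k := by
  intro k
  induction k with
  | zero =>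
    intro _ u v h
    have huv : u = v := by
      funext i
      have := h i.1 i.2 (by omega)
      simpa using this.symm
    subst huv
    exact ⟨Walk.nil, by simp⟩
  | succ k ih =>
    intro hk u v h
    have hm1k : m - 1 - k < m := by omega
    set w1 : Wd m A := fun i => if h2 : (i : ℕ) + 1 < m then u ⟨(i : ℕ) + 1, h2⟩
      else v ⟨m - 1 - k, hm1k⟩ with hw1
    have hshift : Shift u w1 := by
      intro i h1 h2
      simp only [hw1]
      rw [dif_pos h2]
    have hcond : ∀ (i : ℕ) (hi : i < m) (hik : i + k < m), v ⟨i, hi⟩ = w1 ⟨i + k, hik⟩ := by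
      intro i hi hik
      by_cases h2 : i + k + 1 < m
      · have e1 : w1 ⟨i + k, hik⟩ = u ⟨i + k + 1, h2⟩ := by
          simp only [hw1]
          rw [dif_pos h2]
        rw [e1]
        exact h i hi h2
      · have hieq : i = m - 1 - k := by omega
        have e1 : w1 ⟨i + k, hik⟩ = v ⟨m - 1 - k, hm1k⟩ := by
          simp only [hw1]
          rw [dif_neg h2]
        rw [e1]
        congr 1
        exact Fin.ext hieq
    obtain ⟨p, hp⟩ := ih (by omega) w1 v hcond
    by_cases he : u = w1
    · refine ⟨p.copy (by rw [he]) rfl, ?_⟩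
      rw [Walk.length_copy]
      omega
    · refine ⟨Walk.cons (show (DB m A T).Adj (.inl u) (.inl w1) from ⟨he, Or.inl hshift⟩) p, ?_⟩
      simp only [Walk.length_cons]
      omega

lemma to_hub (x : Vt m A T) : ∃ (w : Wd m A) (p : (DB m A T).Walk x (.inl w)), p.length ≤ 1 := by
  rcases x with w | ⟨w, t, i⟩
  · exact ⟨w, Walk.nil, by simp⟩
  · exact ⟨w, Walk.cons (show (DB m A T).Adj (Sum.inr (w, t, i)) (Sum.inl w) from rfl) Walk.nil, by simp⟩

lemma walk_all (hm : 0 < m) (u v : Vt m A T) :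
    ∃ p : (DB m A T).Walk u v, p.length ≤ m + 2 := by
  obtain ⟨wu, p1, hp1⟩ := to_hub u
  obtain ⟨wv, p3, hp3⟩ := to_hub v
  obtain ⟨p2, hp2⟩ := walk_hub (A := A) (T := T) hm m le_rfl wu wv
    (fun i hi hik => absurd hik (by omega))
  refine ⟨p1.append (p2.append p3.reverse), ?_⟩
  simp only [Walk.length_append, Walk.length_reverse]
  omega

end S14

open SimpleGraph

/-- Generic counting lemma: in a finite connected graph of diameter ≤ r, the vertices of a set S,
all of degree d, have distinct pallets, each of which is a (d+1)-subset of [1,k]. -/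
lemma pallet_count {V : Type} [Fintype V] (G : SimpleGraph V) (r k d : ℕ)
    (cv : V → ℕ) (ce : Sym2 V → ℕ)
    (hcol : IsRDistSetDist G r k cv ce)
    (hwalk : ∀ u v : V, ∃ p : G.Walk u v, p.length ≤ r)
    (S : Finset V) (hdeg : ∀ v ∈ S, degOf G v = d) :
    S.card ≤ Nat.choose k (d + 1) := by
  classical
  obtain ⟨⟨hpv, hpe, hpi⟩, hcv, hce, hdist⟩ := hcol
  have hfin : ∀ v : V, (pallet G cv ce v).Finite := fun v =>
    (Set.finite_singleton _).union ((Set.toFinite _).image _)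
  set f : V → Finset ℕ := fun v => (hfin v).toFinset with hf
  have hmaps : ∀ v ∈ S, f v ∈ (Finset.Icc 1 k).powersetCard (d + 1) := by
    intro v hv
    rw [Finset.mem_powersetCard]
    constructor
    · intro x hx
      rw [hf, Set.Finite.mem_toFinset] at hx
      rcases hx with hx | ⟨e, he, rfl⟩
      · rcases hx with rfl
        have := hcv v
        simpa [Finset.mem_Icc] using this
      · have := hce e he.1
        simpa [Finset.mem_Icc] using this
    · -- card = d + 1
      have hcards : (f v).card = (pallet G cv ce v).ncard := by
        rw [hf]
        exact (Set.ncard_eq_toFinset_card _ (hfin v)).symm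
      rw [hcards]
      unfold pallet
      have hdisj : Disjoint {cv v} (ce '' G.incidenceSet v) := by
        rw [Set.disjoint_left]
        rintro x rfl ⟨e, he, hee⟩
        exact hpi v e he hee.symm
      rw [Set.ncard_union_eq hdisj (Set.toFinite _) (Set.toFinite _), Set.ncard_singleton]
      have hinjce : Set.InjOn ce (G.incidenceSet v) := by
        intro e he e' he' hee
        by_contra hne
        exact hpe e e' he.1 he'.1 hne ⟨v, he.2, he'.2⟩ hee
      rw [Set.ncard_image_of_injOn hinjce]
      have heq : (G.incidenceSet v).ncard = degOf G v := by
        unfold degOf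
        rw [← Nat.card_coe_set_eq, ← Nat.card_coe_set_eq]
        exact Nat.card_congr (G.incidenceSetEquivNeighborSet v)
      rw [heq, hdeg v hv]
      omega
  have hinj : Set.InjOn f S := by
    intro u hu v hv hfe
    by_contra hne
    have hreach : G.Reachable u v := ⟨(hwalk u v).choose⟩
    have h1 : 1 ≤ G.dist u v := hreach.pos_dist_of_ne hne
    have h2 : G.dist u v ≤ r := le_trans (dist_le _) (hwalk u v).choose_spec
    apply hdist u v h1 h2
    have := congrArg (fun s : Finset ℕ => (s : Set ℕ)) hfe
    simpa [hf, Set.Finite.coe_toFinset] using this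
  have hle := Finset.card_le_card_of_injOn f hmaps hinj
  rwa [Finset.card_powersetCard, Nat.card_Icc, Nat.add_sub_cancel] at hle

theorem stmt_14 (r : ℕ) (hr : 9 ≤ r) (C₀ : ℕ) :
    (∀ M : ℕ, ∃ (V : Type) (_ : Fintype V) (G : SimpleGraph V),
      M ≤ maxDeg G ∧ minDeg G = r - 2 ∧
      (∀ u v : V, ∃ p : G.Walk u v, p.length ≤ r) ∧
      ¬ ∃ (cv : V → ℕ) (ce : Sym2 V → ℕ), IsRDistSetDist G r (maxDeg G + C₀) cv ce) ∧
    ∀ δ₀ : ℕ,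
      (∀ (V : Type) (_ : Fintype V) (G : SimpleGraph V), δ₀ ≤ minDeg G →
        ∃ (cv : V → ℕ) (ce : Sym2 V → ℕ), IsRDistSetDist G r (maxDeg G + C₀) cv ce) →
      r - 1 ≤ δ₀ := by
  have hm7 : 7 ≤ r - 2 := by omega
  set m := r - 2 with hmdef
  have hr2 : r = m + 2 := by omega
  have main : ∀ M : ℕ, ∃ (V : Type) (_ : Fintype V) (G : SimpleGraph V),
      M ≤ maxDeg G ∧ minDeg G = m ∧
      (∀ u v : V, ∃ p : G.Walk u v, p.length ≤ r) ∧
      ¬ ∃ (cv : V → ℕ) (ce : Sym2 V → ℕ), IsRDistSetDist G r (maxDeg G + C₀) cv ce := by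
    intro M
    set N := max (max M 1) C₀ with hNdef
    have hN1 : 1 ≤ N := le_trans (le_max_right M 1) (le_max_left _ _)
    have hNM : M ≤ N := le_trans (le_max_left M 1) (le_max_left _ _)
    have hNC : C₀ ≤ N := le_max_right _ _
    set A := N * m * m with hAdef
    set T := 2 * N with hTdef
    have hm0 : 0 < m := by omega
    have hA1 : 1 ≤ A := by
      have : 1 * 1 * 1 ≤ N * m * m := by
        apply Nat.mul_le_mul (Nat.mul_le_mul hN1 (by omega)) (by omega)
      simpa [hAdef] using this
    have hT1 : 1 ≤ T := by omega
    have hw0 : (Fin m → Fin A) := fun _ => ⟨0, by omega⟩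
    have ht0 : Fin T := ⟨0, by omega⟩
    have hi0 : Fin m := ⟨0, by omega⟩
    set G := S14.DB m A T with hGdef
    have hne : Nonempty (S14.Vt m A T) := ⟨Sum.inl hw0⟩
    have hbdd : BddAbove (Set.range (degOf G)) := (Set.finite_range _).bddAbove
    -- max degree bounds
    have hmaxge : T * m ≤ maxDeg G := by
      refine le_trans (S14.deg_hub_ge hw0) ?_
      exact le_csSup hbdd (Set.mem_range_self _)
    have hmaxle : maxDeg G ≤ 2 * A + T * m := by
      apply csSup_le (Set.range_nonempty _)
      rintro x ⟨v, rfl⟩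
      rcases v with w | ⟨w, t, i⟩
      · exact S14.deg_hub_le hm0 w
      · rw [S14.deg_cl hm0 w t i]
        have : m ≤ T * m := Nat.le_mul_of_pos_left m (by omega)
        omega
    refine ⟨S14.Vt m A T, inferInstance, G, ?_, ?_, ?_, ?_⟩
    · -- M ≤ maxDeg
      refine le_trans ?_ hmaxge
      calc M ≤ N := hNM
        _ = N * 1 := (Nat.mul_one N).symm
        _ ≤ N * m := Nat.mul_le_mul_left N (by omega)
        _ ≤ T * m := Nat.mul_le_mul_right m (by omega)
    · -- minDeg = m
      apply le_antisymm
      · exact Nat.sInf_le ⟨Sum.inr (hw0, ht0, hi0), S14.deg_cl hm0 hw0 ht0 hi0⟩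
      · apply le_csInf (Set.range_nonempty _)
        rintro x ⟨v, rfl⟩
        rcases v with w | ⟨w, t, i⟩
        · refine le_trans ?_ (S14.deg_hub_ge w)
          calc m = 1 * m := (Nat.one_mul m).symm
            _ ≤ T * m := Nat.mul_le_mul_right m hT1
        · rw [S14.deg_cl hm0 w t i]
    · -- diameter
      intro u v
      obtain ⟨p, hp⟩ := S14.walk_all hm0 u v
      exact ⟨p, by omega⟩
    · -- no colouring
      rintro ⟨cv, ce, hcol⟩
      set k := maxDeg G + C₀ with hkdef
      classical
      set S : Finset (S14.Vt m A T) :=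
        Finset.univ.image (Sum.inr : _ → S14.Vt m A T) with hSdef
      have hScard : S.card = A ^ m * T * m := by
        rw [hSdef, Finset.card_image_of_injective _ Sum.inr_injective, Finset.card_univ]
        simp only [Fintype.card_prod, Fintype.card_fun, Fintype.card_fin]
        ring
      have hdeg : ∀ v ∈ S, degOf G v = m := by
        intro v hv
        rw [hSdef, Finset.mem_image] at hv
        obtain ⟨⟨w, t, i⟩, -, rfl⟩ := hv
        exact S14.deg_cl hm0 w t i
      have hcount := pallet_count G r k m cv ce hcol
        (fun u v => by
          obtain ⟨p, hp⟩ := S14.walk_all (A := A) (T := T) hm0 u v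
          exact ⟨p, by omega⟩) S hdeg
      -- numeric contradiction
      have hk : k ≤ 2 * N * m * (m + 1) + C₀ := by
        have : 2 * A + T * m = 2 * N * m * (m + 1) := by
          rw [hAdef, hTdef]; ring
        omega
      have h1 : Nat.choose k (m + 1) ≤ Nat.choose (2 * N * m * (m + 1) + C₀) (m + 1) :=
        Nat.choose_le_choose _ hk
      have h2 := aux_count m N C₀ hm7 hN1 (le_trans hNC (Nat.le_mul_of_pos_right N hm0))
      have h3 : A ^ m * T * m = 2 * N ^ (m + 1) * m ^ (2 * m + 1) := by
        rw [hAdef, hTdef, Nat.mul_pow, Nat.mul_pow]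
        ring
      rw [hScard] at hcount
      omega
  constructor
  · intro M
    obtain ⟨V, iF, G, h1, h2, h3, h4⟩ := main M
    exact ⟨V, iF, G, h1, h2, h3, h4⟩
  · intro δ₀ hδ
    by_contra hlt
    obtain ⟨V, iF, G, -, hmin, -, hnot⟩ := main 0
    exact hnot (hδ V iF G (by omega))
end

section
/- Let A₁,…,Aₙ be events in a probability space such that each A_i is mutually independent of all but at most D of the other events, and Pr(A_i) ≤ p for all i. If e·p·(D+1) ≤ 1 then Pr(⋂ᵢ complement(A_i)) > 0. -/
open MeasureTheory

-- key numeric fact: (1+1/(D+1))^(D+1) ≤ e, hence 1 ≤ e(D+1)·x(1-x)^D for x = 1/(D+2)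
lemma lll_arith (D : ℕ) :
    1 ≤ Real.exp 1 * ((D:ℝ)+1) * ((1/((D:ℝ)+2)) * (1 - 1/((D:ℝ)+2))^D) := by
  have hD1 : (0:ℝ) < (D:ℝ)+1 := by positivity
  have hD2 : (0:ℝ) < (D:ℝ)+2 := by positivity
  have h1x : (1 : ℝ) - 1/((D:ℝ)+2) = ((D:ℝ)+1)/((D:ℝ)+2) := by field_simp; ring
  have hle : (((D:ℝ)+2)/((D:ℝ)+1))^(D+1) ≤ Real.exp 1 := by
    have h1 : ((D:ℝ)+2)/((D:ℝ)+1) = 1 + 1/((D:ℝ)+1) := by field_simp; ring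
    have h2 : (1 + 1/((D:ℝ)+1)) ≤ Real.exp (1/((D:ℝ)+1)) := by
      have := Real.add_one_le_exp (1/((D:ℝ)+1)); linarith
    calc (((D:ℝ)+2)/((D:ℝ)+1))^(D+1) = (1+1/((D:ℝ)+1))^(D+1) := by rw [h1]
      _ ≤ (Real.exp (1/((D:ℝ)+1)))^(D+1) := by
          apply pow_le_pow_left₀ (by positivity) h2
      _ = Real.exp (((D:ℕ)+1 : ℕ) * (1/((D:ℝ)+1))) := by
          rw [Real.exp_nat_mul]
      _ = Real.exp 1 := by
          congr 1
          push_cast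
          field_simp
  rw [div_pow, div_le_iff₀ (by positivity)] at hle
  have hx : (1/((D:ℝ)+2)) * (1 - 1/((D:ℝ)+2))^D = ((D:ℝ)+1)^D / ((D:ℝ)+2)^(D+1) := by
    rw [h1x, div_pow, pow_succ]
    field_simp
  rw [hx, mul_div_assoc', le_div_iff₀ (by positivity), one_mul]
  calc ((D:ℝ)+2)^(D+1) ≤ Real.exp 1 * (((D:ℝ)+1)^(D+1)) := hle
    _ = Real.exp 1 * ((D:ℝ)+1) * ((D:ℝ)+1)^D := by rw [pow_succ]; ring

/-- The symmetric Lovász Local Lemma. Each event `A i` is mutually independent of all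
the other events except those indexed by a set `T i` of size at most `D`; mutual
independence of `A i` from a family of events means that `A i` is independent of every
intersection of events from that family. -/
theorem stmt_16 {Ω : Type*} [MeasurableSpace Ω] (μ : Measure Ω) [IsProbabilityMeasure μ]
    (n : ℕ) (A : Fin n → Set Ω) (hA : ∀ i, MeasurableSet (A i))
    (D : ℕ) (p : ℝ)
    (hdep : ∀ i, ∃ T : Finset (Fin n), i ∉ T ∧ T.card ≤ D ∧
      ∀ J : Finset (Fin n), (∀ j ∈ J, j ≠ i ∧ j ∉ T) →
        μ (A i ∩ ⋂ j ∈ J, A j) = μ (A i) * μ (⋂ j ∈ J, A j))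
    (hp : ∀ i, μ (A i) ≤ ENNReal.ofReal p)
    (h : Real.exp 1 * p * (D + 1) ≤ 1) :
    0 < μ (⋂ i, (A i)ᶜ) := by
  classical
  set f : Set Ω → ℝ := fun s => (μ s).toReal with hfdef
  set B : Finset (Fin n) → Set Ω := fun S => ⋂ j ∈ S, (A j)ᶜ with hBdef
  have hmeasB : ∀ S : Finset (Fin n), MeasurableSet (B S) := fun S =>
    MeasurableSet.biInter (S.countable_toSet) (fun j _ => (hA j).compl)
  have hmeasI : ∀ J : Finset (Fin n), MeasurableSet (⋂ j ∈ J, A j) := fun J =>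
    MeasurableSet.biInter (J.countable_toSet) (fun j _ => hA j)
  have hfin : ∀ s : Set Ω, μ s ≠ ⊤ := fun s => measure_ne_top μ s
  have fnonneg : ∀ s : Set Ω, 0 ≤ f s := fun s => ENNReal.toReal_nonneg
  have fmono : ∀ {s t : Set Ω}, s ⊆ t → f s ≤ f t := fun hst =>
    ENNReal.toReal_le_toReal (hfin _) (hfin _) |>.mpr (measure_mono hst)
  have funiv : f Set.univ = 1 := by simp [hfdef]
  have fdiff : ∀ X Y : Set Ω, MeasurableSet Y → Y ⊆ X → f (X \ Y) = f X - f Y := by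
    intro X Y hY hYX
    rw [hfdef]
    simp only
    rw [measure_diff hYX hY.nullMeasurableSet (hfin Y),
      ENNReal.toReal_sub_of_le (measure_mono hYX) (hfin X)]
  -- the basic step: removing one more event
  have fstep : ∀ (k : Fin n) (V : Finset (Fin n)),
      f (B (insert k V)) = f (B V) - f (A k ∩ B V) := by
    intro k V
    have hset : B (insert k V) = B V \ (A k ∩ B V) := by
      ext ω
      simp only [hBdef, Set.mem_iInter, Finset.mem_insert, Set.mem_diff, Set.mem_inter_iff,
        Set.mem_compl_iff]
      constructor
      · intro hω
        refine ⟨fun j hj => hω j (Or.inr hj), ?_⟩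
        intro hc
        exact hω k (Or.inl rfl) hc.1
      · rintro ⟨h1, h2⟩ j hj
        rcases hj with rfl | hj
        · intro hA'
          exact h2 ⟨hA', h1⟩
        · exact h1 j hj
    rw [hset, fdiff _ _ ((hA k).inter (hmeasB V)) Set.inter_subset_right]
  set x : ℝ := 1/((D:ℝ)+2) with hxdef
  have hx0 : 0 < x := by positivity
  have hx1 : x < 1 := by
    rw [hxdef, div_lt_one (by positivity)]
    have : (0:ℝ) ≤ (D:ℝ) := Nat.cast_nonneg D
    linarith
  have h1x : 0 < 1 - x := by linarith
  have harith := lll_arith D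
  -- each event has probability at most x(1-x)^D
  have hpx : ∀ i, f (A i) ≤ x * (1-x)^D := by
    intro i
    have hrhs : 0 ≤ x * (1-x)^D := by positivity
    have hfi : f (A i) ≤ max p 0 := by
      have := ENNReal.toReal_le_toReal (hfin (A i)) ENNReal.ofReal_ne_top |>.mpr (hp i)
      rwa [ENNReal.toReal_ofReal'] at this
    rcases le_or_gt p 0 with hp0 | hp0
    · calc f (A i) ≤ max p 0 := hfi
        _ = 0 := by simp [hp0]
        _ ≤ x * (1-x)^D := hrhs
    · have hfi' : f (A i) ≤ p := by
        rwa [max_eq_left hp0.le] at hfi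
      have hexp : 0 < Real.exp 1 := Real.exp_pos 1
      have hD1 : (0:ℝ) < (D:ℝ)+1 := by positivity
      -- p ≤ x(1-x)^D: from h: e·p·(D+1) ≤ 1 ≤ e·(D+1)·x(1-x)^D
      have : p ≤ x * (1-x)^D := by
        have h2 : Real.exp 1 * ((D:ℝ)+1) * p ≤ Real.exp 1 * ((D:ℝ)+1) * (x * (1-x)^D) := by
          calc Real.exp 1 * ((D:ℝ)+1) * p = Real.exp 1 * p * ((D:ℝ)+1) := by ring
            _ ≤ 1 := h
            _ ≤ Real.exp 1 * ((D:ℝ)+1) * (x * (1-x)^D) := harith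
        exact le_of_mul_le_mul_left h2 (by positivity)
      linarith
  -- the main induction
  have key : ∀ m : ℕ, ∀ S : Finset (Fin n), S.card ≤ m → ∀ i, i ∉ S →
      f (A i ∩ B S) ≤ x * f (B S) := by
    intro m
    induction m using Nat.strong_induction_on with
    | _ m IH =>
    intro S hSm i hiS
    obtain ⟨T, hiT, hTD, hT⟩ := hdep i
    set S₁ : Finset (Fin n) := S ∩ T with hS₁def
    set S₂ : Finset (Fin n) := S \ T with hS₂def
    have hS₂S : S₂ ⊆ S := Finset.sdiff_subset
    have hS₂prop : ∀ j ∈ S₂, j ≠ i ∧ j ∉ T := by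
      intro j hj
      rw [hS₂def, Finset.mem_sdiff] at hj
      exact ⟨fun hji => hiS (hji ▸ hj.1), hj.2⟩
    -- independence of A i from intersections of complements over S₂
    have hInd : ∀ S' : Finset (Fin n), (∀ j ∈ S', j ≠ i ∧ j ∉ T) →
        ∀ J : Finset (Fin n), (∀ j ∈ J, j ≠ i ∧ j ∉ T) →
        f (A i ∩ (B S' ∩ ⋂ j ∈ J, A j)) = f (A i) * f (B S' ∩ ⋂ j ∈ J, A j) := by
      intro S'
      induction S' using Finset.induction_on with
      | empty =>
        intro _ J hJ
        have hBempty : B (∅ : Finset (Fin n)) = Set.univ := by simp [hBdef]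
        rw [hBempty, Set.univ_inter]
        have := hT J hJ
        rw [hfdef]
        simp only
        rw [this, ENNReal.toReal_mul]
      | insert _ _ hk =>
        rename_i k S'' IHs
        intro hins J hJ
        have hk' : k ≠ i ∧ k ∉ T := hins k (Finset.mem_insert_self k S'')
        have hS'' : ∀ j ∈ S'', j ≠ i ∧ j ∉ T := fun j hj => hins j (Finset.mem_insert_of_mem hj)
        have hJ' : ∀ j ∈ insert k J, j ≠ i ∧ j ∉ T := by
          intro j hj
          rcases Finset.mem_insert.mp hj with rfl | hj
          · exact hk'
          · exact hJ j hj
        set X : Set Ω := B S'' ∩ ⋂ j ∈ J, A j with hXdef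
        set Y : Set Ω := B S'' ∩ ⋂ j ∈ insert k J, A j with hYdef
        have hYeq : Y = X ∩ A k := by
          have h1 : (⋂ j ∈ insert k J, A j) = A k ∩ ⋂ j ∈ J, A j :=
            Finset.set_biInter_insert k J A
          rw [hYdef, hXdef, h1]
          ext ω
          simp only [Set.mem_inter_iff]
          tauto
        have hYX : Y ⊆ X := by rw [hYeq]; exact Set.inter_subset_left
        have hYmeas : MeasurableSet Y := (hmeasB S'').inter (hmeasI (insert k J))
        have hBset : B (insert k S'') ∩ ⋂ j ∈ J, A j = X \ Y := by
          rw [hYeq, Set.diff_self_inter]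
          have h2 : B (insert k S'') = (A k)ᶜ ∩ B S'' := by
            simp only [hBdef]
            exact Finset.set_biInter_insert k S'' (fun j => (A j)ᶜ)
          rw [h2, hXdef, Set.diff_eq]
          ext ω
          simp only [Set.mem_inter_iff, Set.mem_compl_iff]
          tauto
        have hgoal_set : A i ∩ (B (insert k S'') ∩ ⋂ j ∈ J, A j) = (A i ∩ X) \ (A i ∩ Y) := by
          rw [hBset, Set.inter_diff_distrib_left]
        rw [hgoal_set,
          fdiff _ _ ((hA i).inter hYmeas) (Set.inter_subset_inter_right _ hYX),
          IHs hS'' J hJ, IHs hS'' (insert k J) hJ', hBset,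
          fdiff _ _ hYmeas hYX, mul_sub]
    have hfind : f (A i ∩ B S₂) = f (A i) * f (B S₂) := by
      have := hInd S₂ hS₂prop ∅ (by simp)
      simpa using this
    -- lower bound f (B (S₂ ∪ U)) using the induction hypothesis
    have claimB : ∀ U : Finset (Fin n), U ⊆ S₁ →
        (1-x)^U.card * f (B S₂) ≤ f (B (S₂ ∪ U)) := by
      intro U
      induction U using Finset.induction_on with
      | empty => intro _; simp
      | insert _ _ hk =>
        rename_i k U' IHU
        intro hsub
        have hU' : U' ⊆ S₁ := (Finset.insert_subset_iff.mp hsub).2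
        have hkS₁ : k ∈ S₁ := hsub (Finset.mem_insert_self k U')
        have hkT : k ∈ T := (Finset.mem_inter.mp hkS₁).2
        have hkS : k ∈ S := (Finset.mem_inter.mp hkS₁).1
        have hknot : k ∉ S₂ ∪ U' := by
          rw [Finset.mem_union]
          rintro (hc | hc)
          · exact (Finset.mem_sdiff.mp hc).2 hkT
          · exact hk hc
        have hsubS : S₂ ∪ U' ⊆ S := by
          apply Finset.union_subset hS₂S
          intro j hj
          exact (Finset.mem_inter.mp (hU' hj)).1
        have hssub : (S₂ ∪ U').card < S.card := by
          apply Finset.card_lt_card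
          rw [Finset.ssubset_iff_of_subset hsubS]
          exact ⟨k, hkS, hknot⟩
        have hIH := IH (S₂ ∪ U').card (lt_of_lt_of_le hssub hSm) (S₂ ∪ U') le_rfl k hknot
        have hstep := fstep k (S₂ ∪ U')
        have hunion : S₂ ∪ insert k U' = insert k (S₂ ∪ U') := Finset.union_insert k S₂ U'
        rw [hunion, hstep]
        have hBnn : 0 ≤ f (B (S₂ ∪ U')) := fnonneg _
        calc (1-x)^(insert k U').card * f (B S₂)
            = (1-x) * ((1-x)^U'.card * f (B S₂)) := by
              rw [Finset.card_insert_of_notMem hk, pow_succ]; ring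
          _ ≤ (1-x) * f (B (S₂ ∪ U')) := by
              apply mul_le_mul_of_nonneg_left (IHU hU') h1x.le
          _ = f (B (S₂ ∪ U')) - x * f (B (S₂ ∪ U')) := by ring
          _ ≤ f (B (S₂ ∪ U')) - f (A k ∩ B (S₂ ∪ U')) := by linarith [hIH]
    have hBS : B (S₂ ∪ S₁) = B S := by
      congr 1
      rw [hS₂def, hS₁def, Finset.sdiff_union_inter]
    have hclaim := claimB S₁ Finset.Subset.rfl
    rw [hBS] at hclaim
    have hcard : S₁.card ≤ D := le_trans (Finset.card_le_card Finset.inter_subset_right) hTD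
    have hpow : (1-x)^D ≤ (1-x)^S₁.card := pow_le_pow_of_le_one h1x.le (by linarith) hcard
    calc f (A i ∩ B S) ≤ f (A i ∩ B S₂) := by
          apply fmono
          apply Set.inter_subset_inter_right
          intro ω hω
          simp only [hBdef, Set.mem_iInter] at hω ⊢
          exact fun j hj => hω j (hS₂S hj)
      _ = f (A i) * f (B S₂) := hfind
      _ ≤ (x * (1-x)^D) * f (B S₂) := mul_le_mul_of_nonneg_right (hpx i) (fnonneg _)
      _ ≤ (x * (1-x)^S₁.card) * f (B S₂) := by
          apply mul_le_mul_of_nonneg_right _ (fnonneg _)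
          exact mul_le_mul_of_nonneg_left hpow hx0.le
      _ = x * ((1-x)^S₁.card * f (B S₂)) := by ring
      _ ≤ x * f (B S) := mul_le_mul_of_nonneg_left hclaim hx0.le
  -- lower bound on the intersection
  have lower : ∀ S : Finset (Fin n), (1-x)^S.card ≤ f (B S) := by
    intro S
    induction S using Finset.induction_on with
    | empty => simp [hBdef, funiv]
    | insert _ _ hk =>
      rename_i k S' IH'
      rw [fstep k S', Finset.card_insert_of_notMem hk, pow_succ]
      have hkey := key S'.card S' le_rfl k hk
      have : (1-x)^S'.card * (1-x) ≤ (1-x) * f (B S') := by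
        rw [mul_comm]
        exact mul_le_mul_of_nonneg_left IH' h1x.le
      have hfB : (1-x) * f (B S') = f (B S') - x * f (B S') := by ring
      linarith
  have hBuniv : ⋂ i, (A i)ᶜ = B Finset.univ := by
    ext ω; simp [hBdef]
  have hlow := lower Finset.univ
  have hposf : 0 < f (B Finset.univ) := lt_of_lt_of_le (pow_pos h1x _) hlow
  rw [hBuniv, pos_iff_ne_zero]
  intro hzero
  rw [hfdef] at hposf
  simp only [hzero, ENNReal.toReal_zero] at hposf
  exact lt_irrefl 0 hposf
end
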